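/- For P_F ∈ (0,1), γ > 0 and positive integers m, p, the detection probability given by P_D = 1 − (1 − P_F)/(1 + γ(1 − (1 − P_F)^{1/(mp)}))^p satisfies P_D > P_F. -/
import Mathlib


/-- For P_F ∈ (0,1) and γ > 0, P_D = 1 − (1−P_F)/(1+γ(1−(1−P_F)^{1/(mp)}))^p satisfies
P_D > P_F. -/
theorem stmt10 (m p : ℕ) (hm : 0 < m) (hp : 0 < p) (PF γ : ℝ)
    (hPF : PF ∈ Set.Ioo (0 : ℝ) 1) (hγ : 0 < γ) :
    PF < 1 - (1 - PF) / (1 + γ * (1 - (1 - PF) ^ ((1 : ℝ) / (m * p)))) ^ p := by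
  obtain ⟨h0, h1⟩ := hPF
  have h1PF : 0 < 1 - PF := by linarith
  have he : (0 : ℝ) < (1 : ℝ) / (m * p) := by
    have : (0 : ℝ) < (m : ℝ) * p := by positivity
    positivity
  have hr : (1 - PF) ^ ((1 : ℝ) / (m * p)) < 1 :=
    Real.rpow_lt_one h1PF.le (by linarith) he
  have hbase : 1 < 1 + γ * (1 - (1 - PF) ^ ((1 : ℝ) / (m * p))) := by
    nlinarith
  have hD : 1 < (1 + γ * (1 - (1 - PF) ^ ((1 : ℝ) / (m * p)))) ^ p :=
    one_lt_pow₀ hbase hp.ne'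
  have : (1 - PF) / (1 + γ * (1 - (1 - PF) ^ ((1 : ℝ) / (m * p)))) ^ p < 1 - PF := by
    rw [div_lt_iff₀ (by linarith)]
    nlinarith
  linarith
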